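/- Let S and A be nonempty finite sets and let 𝒫 ⊆ Δ(S)^{S×A} be a convex and compact uncertainty set that is weakly sa-tractable. Then for every next-state-independent r ∈ ℝ^{S×A×S} and every γ ∈ [0,1), there exists a deterministic stationary policy π* (i.e. for each s ∈ S, π*_s is a point mass on some action) such that for every μ ∈ Δ(S), min_{P∈𝒫} ∑_s μ_s v^{π*,P}_s equals the supremum over all history-dependent policies π ∈ Π_H of inf_{P∈𝒫} ∑_s μ_s v^{π,P}_s. -/

import Mathlib

open scoped BigOperators

namespace RMDP

variable {S A : Type*} [Fintype S] [Fintype A]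

def IsKernel (P : S → A → S → ℝ) : Prop := ∀ s a, P s a ∈ stdSimplex ℝ S

def IsPolicy (π : S → A → ℝ) : Prop := ∀ s, π s ∈ stdSimplex ℝ A

def NextStateIndep (r : S → A → S → ℝ) : Prop :=
  ∀ (s : S) (a : A) (s' s'' : S), r s a s' = r s a s''

noncomputable def minOver {K : Type*} (K0 : Set K) (f : K → ℝ) : ℝ := sInf (f '' K0)

noncomputable def maxOver {K : Type*} (K0 : Set K) (f : K → ℝ) : ℝ := sSup (f '' K0)

noncomputable def TpiP (π : S → A → ℝ) (r : S → A → S → ℝ) (γ : ℝ)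
    (P : S → A → S → ℝ) (v : S → ℝ) : S → ℝ :=
  fun s => ∑ a, π s a * ∑ s', P s a s' * (r s a s' + γ * v s')

noncomputable def Tpi (US : Set (S → A → S → ℝ)) (π : S → A → ℝ)
    (r : S → A → S → ℝ) (γ : ℝ) (v : S → ℝ) : S → ℝ :=
  fun s => minOver US (fun P => ∑ a, π s a * ∑ s', P s a s' * (r s a s' + γ * v s'))

noncomputable def TpiHat (US : Set (S → A → S → ℝ)) (π : S → A → ℝ)
    (r : S → A → S → ℝ) (γ : ℝ) (v : S → ℝ) : S → ℝ :=
  fun s => ∑ a, π s a * minOver US (fun P => ∑ s', P s a s' * (r s a s' + γ * v s'))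

noncomputable def Topt (US : Set (S → A → S → ℝ)) (r : S → A → S → ℝ) (γ : ℝ)
    (v : S → ℝ) : S → ℝ :=
  fun s => maxOver (stdSimplex ℝ A)
    (fun p => minOver US (fun P => ∑ a, p a * ∑ s', P s a s' * (r s a s' + γ * v s')))

def IsHPolicy (π : List (S × A) → S → A → ℝ) : Prop := ∀ h s, π h s ∈ stdSimplex ℝ A

noncomputable def expRHH (π : List (S × A) → S → A → ℝ)
    (Q : List (S × A) → S → A → S → ℝ) (r : S → A → S → ℝ) :
    ℕ → List (S × A) → S → ℝ
  | 0, h, s => ∑ a, π h s a * ∑ s', Q (h ++ [(s, a)]) s a s' * r s a s'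
  | (t + 1), h, s =>
      ∑ a, π h s a * ∑ s', Q (h ++ [(s, a)]) s a s' * expRHH π Q r t (h ++ [(s, a)]) s'

noncomputable def vHH (π : List (S × A) → S → A → ℝ)
    (Q : List (S × A) → S → A → S → ℝ) (r : S → A → S → ℝ) (γ : ℝ) (s : S) : ℝ :=
  ∑' t : ℕ, γ ^ t * expRHH π Q r t [] s

def STractable (US : Set (S → A → S → ℝ)) : Prop :=
  ∀ π : S → A → ℝ, IsPolicy π →
    ∀ (r : S → A → S → ℝ) (γ : ℝ), 0 ≤ γ → γ < 1 →
      ∀ v : (S → A → S → ℝ) → S → ℝ, (∀ P ∈ US, TpiP π r γ P (v P) = v P) →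
        ∀ u : S → ℝ, Tpi US π r γ u = u →
          ∀ μ ∈ stdSimplex ℝ S,
            minOver US (fun P => ∑ s, μ s * v P s) = ∑ s, μ s * u s

def SATractable (US : Set (S → A → S → ℝ)) : Prop :=
  ∀ π : S → A → ℝ, IsPolicy π →
    ∀ (r : S → A → S → ℝ) (γ : ℝ), 0 ≤ γ → γ < 1 →
      ∀ v : (S → A → S → ℝ) → S → ℝ, (∀ P ∈ US, TpiP π r γ P (v P) = v P) →
        ∀ uhat : S → ℝ, TpiHat US π r γ uhat = uhat →
          ∀ μ ∈ stdSimplex ℝ S,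
            minOver US (fun P => ∑ s, μ s * v P s) = ∑ s, μ s * uhat s

def WeakSTractable (US : Set (S → A → S → ℝ)) : Prop :=
  ∀ π : S → A → ℝ, IsPolicy π →
    ∀ (r : S → A → S → ℝ), NextStateIndep r → ∀ γ : ℝ, 0 ≤ γ → γ < 1 →
      ∀ v : (S → A → S → ℝ) → S → ℝ, (∀ P ∈ US, TpiP π r γ P (v P) = v P) →
        ∀ u : S → ℝ, Tpi US π r γ u = u →
          ∀ μ ∈ stdSimplex ℝ S,
            minOver US (fun P => ∑ s, μ s * v P s) = ∑ s, μ s * u s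

def WeakSATractable (US : Set (S → A → S → ℝ)) : Prop :=
  ∀ π : S → A → ℝ, IsPolicy π →
    ∀ (r : S → A → S → ℝ), NextStateIndep r → ∀ γ : ℝ, 0 ≤ γ → γ < 1 →
      ∀ v : (S → A → S → ℝ) → S → ℝ, (∀ P ∈ US, TpiP π r γ P (v P) = v P) →
        ∀ uhat : S → ℝ, TpiHat US π r γ uhat = uhat →
          ∀ μ ∈ stdSimplex ℝ S,
            minOver US (fun P => ∑ s, μ s * v P s) = ∑ s, μ s * uhat s

def SSPs (US : Set (S → A → S → ℝ)) : Prop :=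
  ∀ V : S → A → S → ℝ, ∃ Pstar ∈ US, ∀ s : S, ∀ P ∈ US,
    (∑ a, ∑ s', Pstar s a s' * V s a s') ≤ ∑ a, ∑ s', P s a s' * V s a s'

def SSPsa (US : Set (S → A → S → ℝ)) : Prop :=
  ∀ V : S → A → S → ℝ, ∃ Pstar ∈ US, ∀ (s : S) (a : A), ∀ P ∈ US,
    (∑ s', Pstar s a s' * V s a s') ≤ ∑ s', P s a s' * V s a s'

def WeakSSPs (US : Set (S → A → S → ℝ)) : Prop :=
  ∀ π : S → A → ℝ, IsPolicy π → ∀ V : S → ℝ, ∃ Pstar ∈ US, ∀ s : S, ∀ P ∈ US,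
    (∑ a, π s a * ∑ s', Pstar s a s' * V s') ≤ ∑ a, π s a * ∑ s', P s a s' * V s'

def WeakSSPsa (US : Set (S → A → S → ℝ)) : Prop :=
  ∀ V : S → ℝ, ∃ Pstar ∈ US, ∀ (s : S) (a : A), ∀ P ∈ US,
    (∑ s', Pstar s a s' * V s') ≤ ∑ s', P s a s' * V s'


/-! ### Basic helpers -/

section Helpers

lemma wavg_le_of_le {X : Type*} [Fintype X] {p f : X → ℝ} {B : ℝ}
    (hp : p ∈ stdSimplex ℝ X) (hf : ∀ x, f x ≤ B) : ∑ x, p x * f x ≤ B := by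
  calc ∑ x, p x * f x ≤ ∑ x, p x * B :=
        Finset.sum_le_sum fun x _ => mul_le_mul_of_nonneg_left (hf x) (hp.1 x)
    _ = B := by rw [← Finset.sum_mul, hp.2, one_mul]

lemma le_wavg_of_le {X : Type*} [Fintype X] {p f : X → ℝ} {B : ℝ}
    (hp : p ∈ stdSimplex ℝ X) (hf : ∀ x, B ≤ f x) : B ≤ ∑ x, p x * f x := by
  calc B = ∑ x, p x * B := by rw [← Finset.sum_mul, hp.2, one_mul]
    _ ≤ ∑ x, p x * f x :=
        Finset.sum_le_sum fun x _ => mul_le_mul_of_nonneg_left (hf x) (hp.1 x)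

lemma abs_wavg_le {X : Type*} [Fintype X] {p f : X → ℝ} {B : ℝ}
    (hp : p ∈ stdSimplex ℝ X) (hf : ∀ x, |f x| ≤ B) : |∑ x, p x * f x| ≤ B := by
  rw [abs_le]
  exact ⟨le_wavg_of_le hp fun x => neg_le_of_abs_le (hf x),
         wavg_le_of_le hp fun x => le_of_abs_le (hf x)⟩

lemma wavg_affine {X : Type*} [Fintype X] {p : X → ℝ} (hp : p ∈ stdSimplex ℝ X)
    (c γ : ℝ) (v : X → ℝ) : ∑ x, p x * (c + γ * v x) = c + γ * ∑ x, p x * v x := by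
  have h : ∀ x, p x * (c + γ * v x) = p x * c + γ * (p x * v x) := fun x => by ring
  rw [Finset.sum_congr rfl fun x _ => h x, Finset.sum_add_distrib, ← Finset.sum_mul, hp.2,
    ← Finset.mul_sum]
  ring

lemma wavg_dist {X : Type*} [Fintype X] {p : X → ℝ} (hp : p ∈ stdSimplex ℝ X)
    (v w : X → ℝ) : |∑ x, p x * v x - ∑ x, p x * w x| ≤ dist v w := by
  rw [← Finset.sum_sub_distrib]
  have h : ∀ x : X, p x * v x - p x * w x = p x * (v x - w x) := fun x => by ring
  rw [Finset.sum_congr rfl fun x _ => h x]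
  exact abs_wavg_le hp fun x => by
    have := dist_le_pi_dist v w x
    rwa [Real.dist_eq] at this

/-! ### minOver lemmas -/

lemma minOver_le {K : Type*} {U : Set K} {f : K → ℝ} {c : ℝ}
    (hbdd : ∀ Q ∈ U, c ≤ f Q) {P : K} (hP : P ∈ U) : minOver U f ≤ f P :=
  csInf_le ⟨c, by rintro y ⟨Q, hQ, rfl⟩; exact hbdd Q hQ⟩ ⟨P, hP, rfl⟩

lemma le_minOver {K : Type*} {U : Set K} (hne : U.Nonempty) {f : K → ℝ} {c : ℝ}
    (h : ∀ Q ∈ U, c ≤ f Q) : c ≤ minOver U f :=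
  le_csInf (hne.image f) (by rintro y ⟨Q, hQ, rfl⟩; exact h Q hQ)

lemma minOver_congr {K : Type*} {U : Set K} {f g : K → ℝ} (h : ∀ P ∈ U, f P = g P) :
    minOver U f = minOver U g := by
  unfold minOver
  rw [Set.image_congr h]

lemma minOver_exists {K : Type*} [TopologicalSpace K] {U : Set K} (hne : U.Nonempty)
    (hcpt : IsCompact U) {f : K → ℝ} (hf : ContinuousOn f U) :
    ∃ P ∈ U, (∀ Q ∈ U, f P ≤ f Q) ∧ minOver U f = f P := by
  obtain ⟨P, hP, hmin⟩ := hcpt.exists_isMinOn hne hf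
  have h := isMinOn_iff.1 hmin
  exact ⟨P, hP, h, le_antisymm (minOver_le h hP) (le_minOver hne h)⟩

lemma minOver_le_minOver_add {K : Type*} {U : Set K} (hne : U.Nonempty) {f g : K → ℝ}
    {δ c : ℝ} (hbf : ∀ Q ∈ U, c ≤ f Q) (h : ∀ P ∈ U, f P ≤ g P + δ) :
    minOver U f ≤ minOver U g + δ := by
  have h1 : minOver U f - δ ≤ minOver U g := by
    refine le_csInf (hne.image g) ?_
    rintro y ⟨P, hP, rfl⟩
    have h2 := minOver_le hbf hP
    have h3 := h P hP
    linarith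
  linarith

lemma abs_minOver_sub_le {K : Type*} {U : Set K} (hne : U.Nonempty) {f g : K → ℝ}
    {δ cf cg : ℝ} (hbf : ∀ Q ∈ U, cf ≤ f Q) (hbg : ∀ Q ∈ U, cg ≤ g Q)
    (h : ∀ P ∈ U, |f P - g P| ≤ δ) : |minOver U f - minOver U g| ≤ δ := by
  rw [abs_sub_le_iff]
  constructor
  · have h1 : minOver U f ≤ minOver U g + δ :=
      minOver_le_minOver_add hne hbf (fun P hP =>
        by have h2 := abs_sub_le_iff.1 (h P hP); linarith [h2.1])
    linarith
  · have h1 : minOver U g ≤ minOver U f + δ :=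
      minOver_le_minOver_add hne hbg (fun P hP =>
        by have h2 := abs_sub_le_iff.1 (h P hP); linarith [h2.2])
    linarith

lemma minOver_affine {K : Type*} [TopologicalSpace K] {U : Set K} (hne : U.Nonempty)
    (hcpt : IsCompact U) {g : K → ℝ} (hg : ContinuousOn g U) (c γ : ℝ) (hγ : 0 ≤ γ) :
    minOver U (fun P => c + γ * g P) = c + γ * minOver U g := by
  obtain ⟨P0, hP0, hmin, hval⟩ := minOver_exists hne hcpt hg
  rw [hval]
  have h1 : ∀ Q ∈ U, c + γ * g P0 ≤ c + γ * g Q := fun Q hQ => by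
    have := hmin Q hQ; nlinarith
  exact le_antisymm (minOver_le h1 hP0) (le_minOver hne h1)

end Helpers

/-! ### Continuity of linear functionals of kernels -/

section Cont
variable {S A : Type*} [Fintype S] [Fintype A]

lemma cont_row (s : S) (a : A) (w : S → ℝ) :
    Continuous (fun P : S → A → S → ℝ => ∑ s', P s a s' * w s') := by
  apply continuous_finset_sum
  intro s' _
  exact ((show Continuous fun P : S → A → S → ℝ => P s a s' by fun_prop).mul
    continuous_const)

lemma cont_big (μ : S → ℝ) (π : S → A → ℝ) (w : S → ℝ) :
    Continuous (fun P : S → A → S → ℝ =>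
      ∑ s, μ s * ∑ a, π s a * ∑ s', P s a s' * w s') := by
  apply continuous_finset_sum
  intro s _
  apply Continuous.mul continuous_const
  apply continuous_finset_sum
  intro a _
  exact Continuous.mul continuous_const (cont_row s a w)

/-! ### the sa-rectangular minimum -/

noncomputable def mA (US : Set (S → A → S → ℝ)) (v : S → ℝ) (s : S) (a : A) : ℝ :=
  minOver US (fun P => ∑ s', P s a s' * v s')

variable {US : Set (S → A → S → ℝ)}

lemma abs_le_dist_zero (v : S → ℝ) (s : S) : |v s| ≤ dist v (0 : S → ℝ) := by
  have h := dist_le_pi_dist v (0 : S → ℝ) s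
  simpa [Real.dist_eq] using h

lemma mA_exists (hne : US.Nonempty) (hcpt : IsCompact US) (v : S → ℝ) (s : S) (a : A) :
    ∃ P ∈ US, (∀ Q ∈ US, ∑ s', P s a s' * v s' ≤ ∑ s', Q s a s' * v s') ∧
      mA US v s a = ∑ s', P s a s' * v s' :=
  minOver_exists hne hcpt (cont_row s a v).continuousOn

lemma mA_le (hker : ∀ P ∈ US, IsKernel P) (v : S → ℝ) {B : ℝ} (hB : ∀ s', |v s'| ≤ B) {s : S} {a : A} {P : S → A → S → ℝ}
    (hP : P ∈ US) : mA US v s a ≤ ∑ s', P s a s' * v s' := by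
  refine minOver_le (c := -B) (fun Q hQ => ?_) hP
  exact le_wavg_of_le ((hker Q hQ) s a) fun s' => neg_le_of_abs_le (hB s')

lemma abs_mA_le (hne : US.Nonempty) (hker : ∀ P ∈ US, IsKernel P) (hcpt : IsCompact US) (v : S → ℝ) {B : ℝ} (hB : ∀ s', |v s'| ≤ B) (s : S) (a : A) :
    |mA US v s a| ≤ B := by
  obtain ⟨P, hP, _, hval⟩ := mA_exists hne hcpt v s a
  rw [hval]
  exact abs_wavg_le ((hker P hP) s a) hB

lemma mA_dist (hne : US.Nonempty) (hker : ∀ P ∈ US, IsKernel P) (v w : S → ℝ) (s : S) (a : A) :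
    |mA US v s a - mA US w s a| ≤ dist v w := by
  refine abs_minOver_sub_le hne (cf := -(dist v 0)) (cg := -(dist w 0)) ?_ ?_ ?_
  · intro Q hQ
    exact le_wavg_of_le ((hker Q hQ) s a) fun s' =>
      neg_le_of_abs_le (abs_le_dist_zero v s')
  · intro Q hQ
    exact le_wavg_of_le ((hker Q hQ) s a) fun s' =>
      neg_le_of_abs_le (abs_le_dist_zero w s')
  · intro P hP
    exact wavg_dist ((hker P hP) s a) v w

/-! ### fixed points of sup-norm contractions -/

lemma exists_fixed [Nonempty S] {γ : ℝ} (hγ0 : 0 ≤ γ) (hγ1 : γ < 1)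
    (F : (S → ℝ) → S → ℝ)
    (hF : ∀ v w : S → ℝ, ∀ s, dist (F v s) (F w s) ≤ γ * dist v w) : ∃ u, F u = u := by
  have hlip : LipschitzWith ⟨γ, hγ0⟩ F := LipschitzWith.of_dist_le_mul fun v w =>
    (dist_pi_le_iff (mul_nonneg hγ0 dist_nonneg)).2 fun s => hF v w s
  have hc : ContractingWith ⟨γ, hγ0⟩ F := ⟨by exact_mod_cast hγ1, hlip⟩
  exact ⟨ContractingWith.fixedPoint F hc, hc.fixedPoint_isFixedPt⟩

lemma fixed_unique [Nonempty S] {γ : ℝ} (hγ0 : 0 ≤ γ) (hγ1 : γ < 1)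
    (F : (S → ℝ) → S → ℝ)
    (hF : ∀ v w : S → ℝ, ∀ s, dist (F v s) (F w s) ≤ γ * dist v w)
    {u w : S → ℝ} (hu : F u = u) (hw : F w = w) : u = w := by
  have h : dist u w ≤ γ * dist u w := by
    calc dist u w = dist (F u) (F w) := by rw [hu, hw]
      _ ≤ γ * dist u w :=
        (dist_pi_le_iff (mul_nonneg hγ0 dist_nonneg)).2 fun s => hF u w s
  have h2 : dist u w ≤ 0 := by nlinarith [dist_nonneg (x := u) (y := w)]
  exact eq_of_dist_eq_zero (le_antisymm h2 dist_nonneg)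

end Cont

set_option linter.unusedSectionVars false

section Ops
variable {S A : Type*} [Fintype S] [Fintype A] [Nonempty S] [Nonempty A]
variable {US : Set (S → A → S → ℝ)}

/-- With a kernel row, `∑ s', P s a s' * (r s a s' + γ * v s')` simplifies. -/
lemma row_eval {P : S → A → S → ℝ} (hP : IsKernel P) {r : S → A → S → ℝ}
    (hr : NextStateIndep r) (γ : ℝ) (v : S → ℝ) (s : S) (a : A) :
    ∑ s', P s a s' * (r s a s' + γ * v s') = r s a s + γ * ∑ s', P s a s' * v s' := by
  rw [Finset.sum_congr rfl fun s' _ => by rw [hr s a s' s]]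
  exact wavg_affine (hP s a) (r s a s) γ v

/-- TpiP with next-state independent rewards. -/
lemma TpiP_eval {π : S → A → ℝ} {P : S → A → S → ℝ} (hP : IsKernel P)
    {r : S → A → S → ℝ} (hr : NextStateIndep r) (γ : ℝ) (v : S → ℝ) (s : S) :
    TpiP π r γ P v s = ∑ a, π s a * (r s a s + γ * ∑ s', P s a s' * v s') := by
  unfold TpiP
  exact Finset.sum_congr rfl fun a _ => by rw [row_eval hP hr]

lemma TpiP_contr {π : S → A → ℝ} (hπ : IsPolicy π) {P : S → A → S → ℝ}
    (hP : IsKernel P) (r : S → A → S → ℝ) {γ : ℝ} (hγ0 : 0 ≤ γ) :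
    ∀ v w : S → ℝ, ∀ s, dist (TpiP π r γ P v s) (TpiP π r γ P w s) ≤ γ * dist v w := by
  intro v w s
  rw [Real.dist_eq]
  unfold TpiP
  rw [← Finset.sum_sub_distrib]
  have h : ∀ a : A, π s a * (∑ s', P s a s' * (r s a s' + γ * v s')) -
      π s a * (∑ s', P s a s' * (r s a s' + γ * w s')) =
      π s a * ((∑ s', P s a s' * (r s a s' + γ * v s')) -
        ∑ s', P s a s' * (r s a s' + γ * w s')) := fun a => by ring
  rw [Finset.sum_congr rfl fun a _ => h a]
  refine abs_wavg_le (hπ s) fun a => ?_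
  have h2 : (∑ s', P s a s' * (r s a s' + γ * v s')) -
      ∑ s', P s a s' * (r s a s' + γ * w s') =
      γ * ((∑ s', P s a s' * v s') - ∑ s', P s a s' * w s') := by
    rw [← Finset.sum_sub_distrib, ← Finset.sum_sub_distrib, Finset.mul_sum]
    exact Finset.sum_congr rfl fun s' _ => by ring
  rw [h2, abs_mul, abs_of_nonneg hγ0]
  exact mul_le_mul_of_nonneg_left (wavg_dist (hP s a) v w) hγ0

lemma TpiHat_contr (hne : US.Nonempty) (hker : ∀ P ∈ US, IsKernel P)
    {π : S → A → ℝ} (hπ : IsPolicy π) (r : S → A → S → ℝ) {γ : ℝ} (hγ0 : 0 ≤ γ) :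
    ∀ v w : S → ℝ, ∀ s, dist (TpiHat US π r γ v s) (TpiHat US π r γ w s) ≤ γ * dist v w := by
  intro v w s
  rw [Real.dist_eq]
  unfold TpiHat
  rw [← Finset.sum_sub_distrib]
  have h : ∀ a : A, π s a * minOver US (fun P => ∑ s', P s a s' * (r s a s' + γ * v s')) -
      π s a * minOver US (fun P => ∑ s', P s a s' * (r s a s' + γ * w s')) =
      π s a * (minOver US (fun P => ∑ s', P s a s' * (r s a s' + γ * v s')) -
        minOver US (fun P => ∑ s', P s a s' * (r s a s' + γ * w s'))) := fun a => by ring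
  rw [Finset.sum_congr rfl fun a _ => h a]
  refine abs_wavg_le (hπ s) fun a => ?_
  refine abs_minOver_sub_le hne
    (cf := -(dist r 0 + γ * dist v 0)) (cg := -(dist r 0 + γ * dist w 0)) ?_ ?_ ?_
  · intro Q hQ
    refine le_wavg_of_le ((hker Q hQ) s a) fun s' => ?_
    have h1 : |r s a s'| ≤ dist r 0 := by
      have h3 := abs_le_dist_zero (v := r s a) s'
      have h4 := dist_le_pi_dist (r s) (0 : A → S → ℝ) a
      have h5 := dist_le_pi_dist r (0 : S → A → S → ℝ) s
      calc |r s a s'| ≤ dist (r s a) (0 : S → ℝ) := h3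
        _ ≤ dist (r s) (0 : A → S → ℝ) := h4
        _ ≤ dist r 0 := h5
    have h5 := abs_le_dist_zero v s'
    have h6 : -(dist r 0 + γ * dist v 0) ≤ r s a s' + γ * v s' := by
      have := neg_le_of_abs_le h1
      have := neg_le_of_abs_le h5
      nlinarith
    exact h6
  · intro Q hQ
    refine le_wavg_of_le ((hker Q hQ) s a) fun s' => ?_
    have h1 : |r s a s'| ≤ dist r 0 := by
      have h3 := abs_le_dist_zero (v := r s a) s'
      have h4 := dist_le_pi_dist (r s) (0 : A → S → ℝ) a
      have h5 := dist_le_pi_dist r (0 : S → A → S → ℝ) s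
      calc |r s a s'| ≤ dist (r s a) (0 : S → ℝ) := h3
        _ ≤ dist (r s) (0 : A → S → ℝ) := h4
        _ ≤ dist r 0 := h5
    have h5 := abs_le_dist_zero w s'
    have := neg_le_of_abs_le h1
    have := neg_le_of_abs_le h5
    nlinarith
  · intro P hP
    have h2 : (∑ s', P s a s' * (r s a s' + γ * v s')) -
        ∑ s', P s a s' * (r s a s' + γ * w s') =
        γ * ((∑ s', P s a s' * v s') - ∑ s', P s a s' * w s') := by
      rw [← Finset.sum_sub_distrib, ← Finset.sum_sub_distrib, Finset.mul_sum]
      exact Finset.sum_congr rfl fun s' _ => by ring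
    rw [h2, abs_mul, abs_of_nonneg hγ0]
    exact mul_le_mul_of_nonneg_left (wavg_dist ((hker P hP) s a) v w) hγ0

/-- The optimal robust Bellman operator (action-max form). -/
noncomputable def Tstar (US : Set (S → A → S → ℝ)) (r : S → A → S → ℝ) (γ : ℝ)
    (v : S → ℝ) : S → ℝ :=
  fun s => Finset.univ.sup' Finset.univ_nonempty (fun a => r s a s + γ * mA US v s a)

lemma sup'_sub_le {X : Type*} [Fintype X] [Nonempty X] {f g : X → ℝ} {δ : ℝ}
    (h : ∀ x, |f x - g x| ≤ δ) :
    |Finset.univ.sup' Finset.univ_nonempty f - Finset.univ.sup' Finset.univ_nonempty g| ≤ δ := by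
  rw [abs_sub_le_iff]
  constructor
  · have h1 : Finset.univ.sup' Finset.univ_nonempty f ≤
        Finset.univ.sup' Finset.univ_nonempty g + δ := by
      refine Finset.sup'_le _ _ fun x _ => ?_
      have h2 := (abs_sub_le_iff.1 (h x)).1
      have h3 := Finset.le_sup' g (Finset.mem_univ x)
      linarith
    linarith
  · have h1 : Finset.univ.sup' Finset.univ_nonempty g ≤
        Finset.univ.sup' Finset.univ_nonempty f + δ := by
      refine Finset.sup'_le _ _ fun x _ => ?_
      have h2 := (abs_sub_le_iff.1 (h x)).2
      have h3 := Finset.le_sup' f (Finset.mem_univ x)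
      linarith
    linarith

lemma Tstar_contr (hne : US.Nonempty) (hker : ∀ P ∈ US, IsKernel P) (hcpt : IsCompact US)
    (r : S → A → S → ℝ) {γ : ℝ} (hγ0 : 0 ≤ γ) :
    ∀ v w : S → ℝ, ∀ s, dist (Tstar US r γ v s) (Tstar US r γ w s) ≤ γ * dist v w := by
  intro v w s
  rw [Real.dist_eq]
  unfold Tstar
  refine sup'_sub_le fun a => ?_
  have h1 : r s a s + γ * mA US v s a - (r s a s + γ * mA US w s a) =
      γ * (mA US v s a - mA US w s a) := by ring
  rw [h1, abs_mul, abs_of_nonneg hγ0]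
  exact mul_le_mul_of_nonneg_left (mA_dist hne hker v w s a) hγ0

end Ops
section HistVal
variable {S A : Type*} [Fintype S] [Fintype A] [Nonempty S] [Nonempty A]

lemma abs_r_le (r : S → A → S → ℝ) (s : S) (a : A) (s' : S) :
    |r s a s'| ≤ dist r (0 : S → A → S → ℝ) := by
  have h3 := abs_le_dist_zero (v := r s a) s'
  have h4 := dist_le_pi_dist (r s) (0 : A → S → ℝ) a
  have h5 := dist_le_pi_dist r (0 : S → A → S → ℝ) s
  calc |r s a s'| ≤ dist (r s a) (0 : S → ℝ) := h3
    _ ≤ dist (r s) (0 : A → S → ℝ) := h4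
    _ ≤ dist r 0 := h5

lemma expRHH_abs_le {π : List (S × A) → S → A → ℝ} (hπ : IsHPolicy π)
    {P : S → A → S → ℝ} (hP : IsKernel P) (r : S → A → S → ℝ) :
    ∀ t h s, |expRHH π (fun _ => P) r t h s| ≤ dist r (0 : S → A → S → ℝ) := by
  intro t
  induction t with
  | zero =>
      intro h s
      show |∑ a, π h s a * ∑ s', P s a s' * r s a s'| ≤ _
      exact abs_wavg_le (hπ h s) fun a => abs_wavg_le (hP s a) fun s' => abs_r_le r s a s'
  | succ t ih =>
      intro h s
      show |∑ a, π h s a * ∑ s', P s a s' * expRHH π (fun _ => P) r t (h ++ [(s, a)]) s'| ≤ _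
      exact abs_wavg_le (hπ h s) fun a => abs_wavg_le (hP s a) fun s' => ih _ s'

lemma expRHH_summable {π : List (S × A) → S → A → ℝ} (hπ : IsHPolicy π)
    {P : S → A → S → ℝ} (hP : IsKernel P) (r : S → A → S → ℝ) {γ : ℝ}
    (hγ0 : 0 ≤ γ) (hγ1 : γ < 1) (h : List (S × A)) (s : S) :
    Summable fun t => γ ^ t * expRHH π (fun _ => P) r t (h : List (S × A)) s := by
  refine Summable.of_norm_bounded (g := fun t => dist r (0 : S → A → S → ℝ) * γ ^ t)
    ((summable_geometric_of_lt_one hγ0 hγ1).mul_left _) fun t => ?_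
  rw [Real.norm_eq_abs, abs_mul, abs_pow, abs_of_nonneg hγ0, mul_comm]
  exact mul_le_mul_of_nonneg_right (expRHH_abs_le hπ hP r t h s) (pow_nonneg hγ0 t)

lemma vHH_abs_le {π : List (S × A) → S → A → ℝ} (hπ : IsHPolicy π)
    {P : S → A → S → ℝ} (hP : IsKernel P) (r : S → A → S → ℝ) {γ : ℝ}
    (hγ0 : 0 ≤ γ) (hγ1 : γ < 1) (s : S) :
    |vHH π (fun _ => P) r γ s| ≤ dist r (0 : S → A → S → ℝ) * (1 - γ)⁻¹ := by
  have hsumg : Summable fun t : ℕ => dist r (0 : S → A → S → ℝ) * γ ^ t :=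
    (summable_geometric_of_lt_one hγ0 hγ1).mul_left _
  have hb : ∀ t : ℕ, ‖γ ^ t * expRHH π (fun _ => P) r t ([] : List (S × A)) s‖ ≤
      dist r (0 : S → A → S → ℝ) * γ ^ t := fun t => by
    rw [Real.norm_eq_abs, abs_mul, abs_pow, abs_of_nonneg hγ0, mul_comm]
    exact mul_le_mul_of_nonneg_right (expRHH_abs_le hπ hP r t [] s) (pow_nonneg hγ0 t)
  have hsumn : Summable fun t : ℕ =>
      ‖γ ^ t * expRHH π (fun _ => P) r t ([] : List (S × A)) s‖ :=
    Summable.of_nonneg_of_le (fun t => norm_nonneg _) hb hsumg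
  calc |vHH π (fun _ => P) r γ s| ≤
        ∑' t : ℕ, ‖γ ^ t * expRHH π (fun _ => P) r t ([] : List (S × A)) s‖ :=
        norm_tsum_le_tsum_norm hsumn
    _ ≤ ∑' t : ℕ, dist r (0 : S → A → S → ℝ) * γ ^ t := Summable.tsum_le_tsum hb hsumn hsumg
    _ = dist r (0 : S → A → S → ℝ) * (1 - γ)⁻¹ := by
        rw [tsum_mul_left, tsum_geometric_of_lt_one hγ0 hγ1]

/-- partial sums of the history value -/
noncomputable def PS (π : List (S × A) → S → A → ℝ) (P : S → A → S → ℝ)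
    (r : S → A → S → ℝ) (γ : ℝ) (t : ℕ) (h : List (S × A)) (s : S) : ℝ :=
  ∑ k ∈ Finset.range t, γ ^ k * expRHH π (fun _ => P) r k h s

lemma PS_succ (π : List (S × A) → S → A → ℝ) (P : S → A → S → ℝ)
    (r : S → A → S → ℝ) (γ : ℝ) (t : ℕ) (h : List (S × A)) (s : S) :
    PS π P r γ (t + 1) h s =
      ∑ a, π h s a * ∑ s', P s a s' * (r s a s' + γ * PS π P r γ t (h ++ [(s, a)]) s') := by
  unfold PS
  rw [Finset.sum_range_succ']
  have h0 : γ ^ 0 * expRHH π (fun _ => P) r 0 h s =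
      ∑ a, π h s a * ∑ s', P s a s' * r s a s' := by
    rw [pow_zero, one_mul]; rfl
  have hstep : ∀ k, γ ^ (k + 1) * expRHH π (fun _ => P) r (k + 1) h s =
      γ ^ (k + 1) * ∑ a, π h s a * ∑ s', P s a s' *
        expRHH π (fun _ => P) r k (h ++ [(s, a)]) s' := fun k => rfl
  rw [h0, Finset.sum_congr rfl fun k _ => hstep k]
  have hrhs : ∀ a, π h s a * ∑ s', P s a s' *
      (r s a s' + γ * ∑ k ∈ Finset.range t, γ ^ k * expRHH π (fun _ => P) r k (h ++ [(s, a)]) s')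
      = π h s a * ∑ s', P s a s' * r s a s' +
        ∑ k ∈ Finset.range t, γ ^ (k + 1) * (π h s a * ∑ s', P s a s' *
          expRHH π (fun _ => P) r k (h ++ [(s, a)]) s') := by
    intro a
    simp only [Finset.mul_sum, mul_add, Finset.sum_add_distrib]
    congr 1
    rw [Finset.sum_comm]
    exact Finset.sum_congr rfl fun k _ => Finset.sum_congr rfl fun s' _ => by ring
  rw [Finset.sum_congr rfl fun a _ => hrhs a, Finset.sum_add_distrib, add_comm]
  congr 1
  rw [Finset.sum_comm]
  refine Finset.sum_congr rfl fun k _ => ?_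
  rw [Finset.mul_sum]

lemma PS_le {π : List (S × A) → S → A → ℝ} (hπ : IsHPolicy π)
    {P : S → A → S → ℝ} (hP : IsKernel P) {r : S → A → S → ℝ} (hr : NextStateIndep r)
    {γ : ℝ} (hγ0 : 0 ≤ γ) {vstar : S → ℝ}
    (hbell : ∀ s a, r s a s + γ * ∑ s', P s a s' * vstar s' ≤ vstar s) :
    ∀ t h s, PS π P r γ t h s ≤ vstar s + γ ^ t * dist vstar (0 : S → ℝ) := by
  intro t
  induction t with
  | zero =>
      intro h s
      have h1 := neg_le_of_abs_le (abs_le_dist_zero vstar s)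
      show (0 : ℝ) ≤ _
      rw [pow_zero, one_mul]
      linarith
  | succ t ih =>
      intro h s
      rw [PS_succ]
      have hM : (0 : ℝ) ≤ dist vstar (0 : S → ℝ) := dist_nonneg
      refine wavg_le_of_le (hπ h s) fun a => ?_
      have hrow : ∑ s', P s a s' * (r s a s' + γ * PS π P r γ t (h ++ [(s, a)]) s') ≤
          ∑ s', P s a s' * (r s a s' + γ * (vstar s' + γ ^ t * dist vstar (0 : S → ℝ))) := by
        refine Finset.sum_le_sum fun s' _ => ?_
        have h1 := ih (h ++ [(s, a)]) s'
        have hp := (hP s a).1 s'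
        have h2 : r s a s' + γ * PS π P r γ t (h ++ [(s, a)]) s' ≤
            r s a s' + γ * (vstar s' + γ ^ t * dist vstar (0 : S → ℝ)) := by nlinarith
        exact mul_le_mul_of_nonneg_left h2 hp
      refine le_trans hrow ?_
      have heq : ∑ s', P s a s' * (r s a s' + γ * (vstar s' + γ ^ t * dist vstar (0 : S → ℝ)))
          = (r s a s + γ * (γ ^ t * dist vstar (0 : S → ℝ))) + γ * ∑ s', P s a s' * vstar s' := by
        have h1 : ∀ s', P s a s' * (r s a s' + γ * (vstar s' + γ ^ t * dist vstar (0 : S → ℝ)))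
            = P s a s' * ((r s a s + γ * (γ ^ t * dist vstar (0 : S → ℝ))) + γ * vstar s') :=
          fun s' => by rw [hr s a s' s]; ring
        rw [Finset.sum_congr rfl fun s' _ => h1 s', wavg_affine (hP s a)]
      rw [heq]
      have hb := hbell s a
      have hpow : γ ^ (t + 1) = γ * γ ^ t := by ring
      rw [hpow]
      linarith

lemma vHH_le_vstar {π : List (S × A) → S → A → ℝ} (hπ : IsHPolicy π)
    {P : S → A → S → ℝ} (hP : IsKernel P) {r : S → A → S → ℝ} (hr : NextStateIndep r)
    {γ : ℝ} (hγ0 : 0 ≤ γ) (hγ1 : γ < 1) {vstar : S → ℝ}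
    (hbell : ∀ s a, r s a s + γ * ∑ s', P s a s' * vstar s' ≤ vstar s) (s : S) :
    vHH π (fun _ => P) r γ s ≤ vstar s := by
  have hsum := expRHH_summable hπ hP r hγ0 hγ1 [] s
  have htend := hsum.hasSum.tendsto_sum_nat
  have htend2 : Filter.Tendsto
      (fun t : ℕ => vstar s + γ ^ t * dist vstar (0 : S → ℝ)) Filter.atTop
      (nhds (vstar s + 0 * dist vstar (0 : S → ℝ))) := by
    exact Filter.Tendsto.const_add _
      (Filter.Tendsto.mul_const _ (tendsto_pow_atTop_nhds_zero_of_lt_one hγ0 hγ1))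
  rw [zero_mul, add_zero] at htend2
  exact le_of_tendsto_of_tendsto' htend htend2 fun t => PS_le hπ hP hr hγ0 hbell t [] s

lemma expRHH_stationary (π0 : S → A → ℝ) (P : S → A → S → ℝ) (r : S → A → S → ℝ) :
    ∀ t h s, expRHH (fun _ => π0) (fun _ => P) r t h s =
      expRHH (fun _ => π0) (fun _ => P) r t [] s := by
  intro t
  induction t with
  | zero => intro h s; rfl
  | succ t ih =>
      intro h s
      show ∑ a, π0 s a * ∑ s', P s a s' *
          expRHH (fun _ => π0) (fun _ => P) r t (h ++ [(s, a)]) s' =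
        ∑ a, π0 s a * ∑ s', P s a s' *
          expRHH (fun _ => π0) (fun _ => P) r t ([] ++ [(s, a)]) s'
      refine Finset.sum_congr rfl fun a _ => ?_
      congr 1
      refine Finset.sum_congr rfl fun s' _ => ?_
      rw [ih (h ++ [(s, a)]) s', ih ([] ++ [(s, a)]) s']

lemma vHH_fixed (π0 : S → A → ℝ) (hπ0 : IsPolicy π0) (P : S → A → S → ℝ)
    (hP : IsKernel P) (r : S → A → S → ℝ) (hr : NextStateIndep r)
    {γ : ℝ} (hγ0 : 0 ≤ γ) (hγ1 : γ < 1) :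
    TpiP π0 r γ P (vHH (fun _ => π0) (fun _ => P) r γ) =
      vHH (fun _ => π0) (fun _ => P) r γ := by
  have hπH : IsHPolicy (fun _ : List (S × A) => π0) := fun _ s => hπ0 s
  set e : ℕ → S → ℝ := fun t s => expRHH (fun _ => π0) (fun _ => P) r t [] s with he
  have hsum : ∀ s : S, Summable fun t => γ ^ t * e t s := fun s =>
    expRHH_summable hπH hP r hγ0 hγ1 [] s
  have hu : ∀ s : S, vHH (fun _ => π0) (fun _ => P) r γ s = ∑' t, γ ^ t * e t s :=
    fun s => rfl
  funext s
  rw [TpiP_eval hP hr, hu s]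
  -- rewrite the inner expected value as a tsum
  have hrow : ∀ a : A, ∑ s', P s a s' * vHH (fun _ => π0) (fun _ => P) r γ s' =
      ∑' t : ℕ, γ ^ t * ∑ s', P s a s' * e t s' := by
    intro a
    have h1 : ∀ s' : S, P s a s' * vHH (fun _ => π0) (fun _ => P) r γ s' =
        ∑' t : ℕ, P s a s' * (γ ^ t * e t s') := fun s' => by
      rw [hu s', ← tsum_mul_left]
    rw [Finset.sum_congr rfl fun s' _ => h1 s', ← Summable.tsum_finsetSum
      (fun s' _ => (hsum s').mul_left (P s a s'))]
    refine tsum_congr fun t => ?_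
    rw [Finset.mul_sum]
    exact Finset.sum_congr rfl fun s' _ => by ring
  rw [Finset.sum_congr rfl fun a _ => by rw [hrow a]]
  -- now LHS = ∑ a, π0 s a * (r s a s + γ * ∑' t, γ^t * w a t)
  have hw : ∀ a : A, Summable fun t : ℕ => γ ^ t * ∑ s', P s a s' * e t s' := by
    intro a
    refine Summable.of_norm_bounded (g := fun t => dist r (0 : S → A → S → ℝ) * γ ^ t)
      ((summable_geometric_of_lt_one hγ0 hγ1).mul_left _) fun t => ?_
    rw [Real.norm_eq_abs, abs_mul, abs_pow, abs_of_nonneg hγ0, mul_comm]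
    refine mul_le_mul_of_nonneg_right ?_ (pow_nonneg hγ0 t)
    exact abs_wavg_le (hP s a) fun s' => expRHH_abs_le hπH hP r t [] s'
  -- each summand rearranged as tsum
  have hsummand : ∀ a : A, Summable fun t : ℕ =>
      γ ^ (t + 1) * (π0 s a * ∑ s', P s a s' * e t s') := by
    intro a
    have h3 : (fun t : ℕ => γ ^ (t + 1) * (π0 s a * ∑ s', P s a s' * e t s')) =
        fun t : ℕ => (π0 s a * γ) * (γ ^ t * ∑ s', P s a s' * e t s') := by
      funext t; ring
    rw [h3]
    exact (hw a).mul_left _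
  have h2 : ∀ a : A, π0 s a * (r s a s + γ * ∑' t : ℕ, γ ^ t * ∑ s', P s a s' * e t s') =
      π0 s a * r s a s + ∑' t : ℕ, γ ^ (t + 1) * (π0 s a * ∑ s', P s a s' * e t s') := by
    intro a
    have h3 : ∑' t : ℕ, γ ^ (t + 1) * (π0 s a * ∑ s', P s a s' * e t s') =
        ∑' t : ℕ, (π0 s a * γ) * (γ ^ t * ∑ s', P s a s' * e t s') :=
      tsum_congr fun t => by ring
    rw [h3, tsum_mul_left]
    ring
  rw [Finset.sum_congr rfl fun a _ => h2 a, Finset.sum_add_distrib]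
  have h4 : ∑ a, π0 s a * r s a s = e 0 s := by
    show _ = ∑ a, π0 s a * ∑ s', P s a s' * r s a s'
    refine Finset.sum_congr rfl fun a _ => ?_
    congr 1
    rw [Finset.sum_congr rfl fun s' _ => by rw [hr s a s' s], ← Finset.sum_mul,
      (hP s a).2, one_mul]
  have h5 : ∑ a, ∑' t : ℕ, γ ^ (t + 1) * (π0 s a * ∑ s', P s a s' * e t s') =
      ∑' t : ℕ, γ ^ (t + 1) * e (t + 1) s := by
    rw [← Summable.tsum_finsetSum fun a _ => hsummand a]
    refine tsum_congr fun t => ?_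
    have h6 : e (t + 1) s = ∑ a, π0 s a * ∑ s', P s a s' * e t s' := by
      show (∑ a, π0 s a * ∑ s', P s a s' *
        expRHH (fun _ => π0) (fun _ => P) r t ([] ++ [(s, a)]) s') = _
      refine Finset.sum_congr rfl fun a _ => ?_
      congr 1
      refine Finset.sum_congr rfl fun s' _ => ?_
      rw [expRHH_stationary π0 P r t ([] ++ [(s, a)]) s']
    rw [h6, Finset.mul_sum]
  rw [h4, h5]
  have h7 := Summable.tsum_eq_zero_add (hsum s)
  rw [pow_zero, one_mul] at h7
  exact h7.symm

section WSSP
variable {S A : Type*} [Fintype S] [Fintype A] [Nonempty S] [Nonempty A]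

set_option maxHeartbeats 1000000 in
lemma first_order {US : Set (S → A → S → ℝ)} (hne : US.Nonempty)
    (hker : ∀ P ∈ US, IsKernel P) (hcpt : IsCompact US) (hwsa : WeakSATractable US)
    (V : S → ℝ) {μ : S → ℝ} (hμ : μ ∈ stdSimplex ℝ S) {π : S → A → ℝ} (hπ : IsPolicy π)
    {γ : ℝ} (hγpos : 0 < γ) (hγhalf : γ ≤ 1 / 2) :
    |minOver US (fun P => ∑ s, μ s * ∑ a, π s a * ∑ s', P s a s' * V s') -
      ∑ s, μ s * ∑ a, π s a * mA US V s a| ≤ 8 * dist V (0 : S → ℝ) * γ := by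
  classical
  set K := dist V (0 : S → ℝ) with hK
  have hKnn : (0 : ℝ) ≤ K := dist_nonneg
  have hVabs : ∀ s, |V s| ≤ K := fun s => abs_le_dist_zero V s
  have hγ0 : (0 : ℝ) ≤ γ := le_of_lt hγpos
  have hγ1 : γ < 1 := by linarith
  set Φ : (S → A → S → ℝ) → ℝ :=
    fun P => ∑ s, μ s * ∑ a, π s a * ∑ s', P s a s' * V s' with hΦdef
  have hΦcont : Continuous Φ := cont_big μ π V
  set Ψ : ℝ := ∑ s, μ s * ∑ a, π s a * mA US V s a with hΨdef
  set r' : S → A → S → ℝ := fun s _ _ => V s with hr'def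
  have hr' : NextStateIndep r' := fun s a s' s'' => rfl
  -- fixed points of the policy evaluation operators
  have hex : ∀ P : S → A → S → ℝ, ∃ u : S → ℝ, P ∈ US → TpiP π r' γ P u = u := by
    intro P
    by_cases hP : P ∈ US
    · obtain ⟨u, hu⟩ := exists_fixed hγ0 hγ1 _ (TpiP_contr hπ (hker P hP) r' hγ0)
      exact ⟨u, fun _ => hu⟩
    · exact ⟨0, fun h => absurd h hP⟩
  choose vP hvPfix using hex
  -- fixed point of the rectangularized operator
  obtain ⟨uh, huh⟩ := exists_fixed hγ0 hγ1 (TpiHat US π r' γ)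
    (TpiHat_contr hne hker hπ r' hγ0)
  have heq := hwsa π hπ r' hr' γ hγ0 hγ1 vP hvPfix uh huh μ hμ
  -- expansion of vP
  have hvexp : ∀ P ∈ US, ∀ s, vP P s =
      V s + γ * ∑ a, π s a * ∑ s', P s a s' * vP P s' := by
    intro P hP s
    conv_lhs => rw [← hvPfix P hP]
    rw [TpiP_eval (hker P hP) hr']
    have h1 : ∀ a : A, r' s a s = V s := fun a => rfl
    rw [Finset.sum_congr rfl fun a _ => by rw [h1 a]]
    exact wavg_affine (hπ s) (V s) γ _
  -- bound on vP
  have hvb : ∀ P ∈ US, dist (vP P) (0 : S → ℝ) ≤ 2 * K := by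
    intro P hP
    have hDnn : (0 : ℝ) ≤ dist (vP P) (0 : S → ℝ) := dist_nonneg
    have hcoord : ∀ s, |vP P s| ≤ K + γ * dist (vP P) (0 : S → ℝ) := by
      intro s
      rw [hvexp P hP s]
      have h2 : |∑ a, π s a * ∑ s', P s a s' * vP P s'| ≤ dist (vP P) (0 : S → ℝ) :=
        abs_wavg_le (hπ s) fun a => abs_wavg_le ((hker P hP) s a) fun s' =>
          abs_le_dist_zero (vP P) s'
      have h3 := abs_add_le (V s) (γ * ∑ a, π s a * ∑ s', P s a s' * vP P s')
      rw [abs_mul, abs_of_nonneg hγ0] at h3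
      refine le_trans h3 ?_
      have h4 := hVabs s
      nlinarith
    have hDle : dist (vP P) (0 : S → ℝ) ≤ K + γ * dist (vP P) (0 : S → ℝ) := by
      refine (dist_pi_le_iff (by nlinarith)).2 fun s => ?_
      simp only [Pi.zero_apply, Real.dist_eq, sub_zero]
      exact hcoord s
    nlinarith
  have hvdist : ∀ P ∈ US, dist (vP P) V ≤ 2 * γ * K := by
    intro P hP
    refine (dist_pi_le_iff (by nlinarith [mul_nonneg hγ0 hKnn])).2 fun s => ?_
    rw [Real.dist_eq, hvexp P hP s]
    have h2 : |∑ a, π s a * ∑ s', P s a s' * vP P s'| ≤ 2 * K :=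
      abs_wavg_le (hπ s) fun a => abs_wavg_le ((hker P hP) s a) fun s' => by
        have h3 := abs_le_dist_zero (vP P) s'
        have h4 := hvb P hP
        linarith
    have h3 : V s + γ * ∑ a, π s a * ∑ s', P s a s' * vP P s' - V s =
        γ * ∑ a, π s a * ∑ s', P s a s' * vP P s' := by ring
    rw [h3, abs_mul, abs_of_nonneg hγ0]
    nlinarith
  -- compare minOver of the two linearizations
  have hg12 : ∀ P ∈ US, |(∑ s, μ s * vP P s) - ((∑ s, μ s * V s) + γ * Φ P)| ≤
      2 * γ * γ * K := by
    intro P hP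
    have h1 : (∑ s, μ s * vP P s) - ((∑ s, μ s * V s) + γ * Φ P) =
        γ * ((∑ s, μ s * ∑ a, π s a * ∑ s', P s a s' * vP P s') - Φ P) := by
      rw [Finset.sum_congr rfl fun s _ => by rw [hvexp P hP s]]
      have h2 : ∀ s : S, μ s * (V s + γ * ∑ a, π s a * ∑ s', P s a s' * vP P s') =
          μ s * V s + γ * (μ s * ∑ a, π s a * ∑ s', P s a s' * vP P s') :=
        fun s => by ring
      rw [Finset.sum_congr rfl fun s _ => h2 s, Finset.sum_add_distrib, hΦdef,
        ← Finset.mul_sum]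
      ring
    rw [h1, abs_mul, abs_of_nonneg hγ0]
    have h4 : |(∑ s, μ s * ∑ a, π s a * ∑ s', P s a s' * vP P s') - Φ P| ≤ 2 * γ * K := by
      rw [hΦdef, ← Finset.sum_sub_distrib]
      have h5 : ∀ s : S, μ s * (∑ a, π s a * ∑ s', P s a s' * vP P s') -
          μ s * (∑ a, π s a * ∑ s', P s a s' * V s') =
          μ s * ((∑ a, π s a * ∑ s', P s a s' * vP P s') -
            ∑ a, π s a * ∑ s', P s a s' * V s') := fun s => by ring
      rw [Finset.sum_congr rfl fun s _ => h5 s]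
      refine abs_wavg_le hμ fun s => ?_
      rw [← Finset.sum_sub_distrib]
      have h6 : ∀ a : A, π s a * ∑ s', P s a s' * vP P s' -
          π s a * ∑ s', P s a s' * V s' =
          π s a * ((∑ s', P s a s' * vP P s') - ∑ s', P s a s' * V s') := fun a => by ring
      rw [Finset.sum_congr rfl fun a _ => h6 a]
      refine abs_wavg_le (hπ s) fun a => ?_
      calc |(∑ s', P s a s' * vP P s') - ∑ s', P s a s' * V s'| ≤ dist (vP P) V :=
            wavg_dist ((hker P hP) s a) _ _
        _ ≤ 2 * γ * K := hvdist P hP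
    nlinarith
  have hbg1 : ∀ P ∈ US, -(2 * K) ≤ ∑ s, μ s * vP P s := by
    intro P hP
    refine le_wavg_of_le hμ fun s => ?_
    have h1 := abs_le_dist_zero (vP P) s
    have h2 := hvb P hP
    have h3 := neg_le_of_abs_le h1
    linarith
  have hbg2 : ∀ P ∈ US, -(2 * K) ≤ (∑ s, μ s * V s) + γ * Φ P := by
    intro P hP
    have h1 : |∑ s, μ s * V s| ≤ K := abs_wavg_le hμ hVabs
    have h2 : |Φ P| ≤ K := by
      rw [hΦdef]
      exact abs_wavg_le hμ fun s => abs_wavg_le (hπ s) fun a =>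
        abs_wavg_le ((hker P hP) s a) hVabs
    have h3 := neg_le_of_abs_le h1
    have h4 := neg_le_of_abs_le h2
    nlinarith
  have hming : |minOver US (fun P => ∑ s, μ s * vP P s) -
      minOver US (fun P => (∑ s, μ s * V s) + γ * Φ P)| ≤ 2 * γ * γ * K :=
    abs_minOver_sub_le hne hbg1 hbg2 hg12
  have hming2 : minOver US (fun P => (∑ s, μ s * V s) + γ * Φ P) =
      (∑ s, μ s * V s) + γ * minOver US Φ :=
    minOver_affine hne hcpt hΦcont.continuousOn _ γ hγ0
  -- uh expansion
  have huexp : ∀ s, uh s = V s + γ * ∑ a, π s a * mA US uh s a := by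
    intro s
    have h1 : ∀ a : A, minOver US (fun P => ∑ s', P s a s' * (r' s a s' + γ * uh s')) =
        V s + γ * mA US uh s a := by
      intro a
      rw [minOver_congr fun P hP => row_eval (hker P hP) hr' γ uh s a]
      exact minOver_affine hne hcpt (cont_row s a uh).continuousOn _ γ hγ0
    conv_lhs => rw [← huh]
    calc TpiHat US π r' γ uh s
        = ∑ a, π s a * minOver US (fun P => ∑ s', P s a s' * (r' s a s' + γ * uh s')) := rfl
      _ = ∑ a, π s a * (V s + γ * mA US uh s a) :=
          Finset.sum_congr rfl fun a _ => by rw [h1 a]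
      _ = V s + γ * ∑ a, π s a * mA US uh s a := wavg_affine (hπ s) (V s) γ _
  have hub : dist uh (0 : S → ℝ) ≤ 2 * K := by
    have hDnn : (0 : ℝ) ≤ dist uh (0 : S → ℝ) := dist_nonneg
    have hcoord : ∀ s, |uh s| ≤ K + γ * dist uh (0 : S → ℝ) := by
      intro s
      rw [huexp s]
      have h2 : |∑ a, π s a * mA US uh s a| ≤ dist uh (0 : S → ℝ) :=
        abs_wavg_le (hπ s) fun a =>
          abs_mA_le hne hker hcpt uh (fun s' => abs_le_dist_zero uh s') s a
      have h3 := abs_add_le (V s) (γ * ∑ a, π s a * mA US uh s a)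
      rw [abs_mul, abs_of_nonneg hγ0] at h3
      refine le_trans h3 ?_
      have h4 := hVabs s
      nlinarith
    have hDle : dist uh (0 : S → ℝ) ≤ K + γ * dist uh (0 : S → ℝ) := by
      refine (dist_pi_le_iff (by nlinarith)).2 fun s => ?_
      simp only [Pi.zero_apply, Real.dist_eq, sub_zero]
      exact hcoord s
    nlinarith
  have hudist : dist uh V ≤ 2 * γ * K := by
    refine (dist_pi_le_iff (by nlinarith [mul_nonneg hγ0 hKnn])).2 fun s => ?_
    rw [Real.dist_eq, huexp s]
    have h2 : |∑ a, π s a * mA US uh s a| ≤ 2 * K :=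
      abs_wavg_le (hπ s) fun a => by
        have h3 := abs_mA_le hne hker hcpt uh (fun s' => abs_le_dist_zero uh s') s a
        linarith [hub]
    have h3 : V s + γ * ∑ a, π s a * mA US uh s a - V s =
        γ * ∑ a, π s a * mA US uh s a := by ring
    rw [h3, abs_mul, abs_of_nonneg hγ0]
    nlinarith
  have huΨ : |(∑ s, μ s * uh s) - ((∑ s, μ s * V s) + γ * Ψ)| ≤ 2 * γ * γ * K := by
    have h1 : (∑ s, μ s * uh s) - ((∑ s, μ s * V s) + γ * Ψ) =
        γ * ((∑ s, μ s * ∑ a, π s a * mA US uh s a) - Ψ) := by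
      rw [Finset.sum_congr rfl fun s _ => by rw [huexp s]]
      have h2 : ∀ s : S, μ s * (V s + γ * ∑ a, π s a * mA US uh s a) =
          μ s * V s + γ * (μ s * ∑ a, π s a * mA US uh s a) := fun s => by ring
      rw [Finset.sum_congr rfl fun s _ => h2 s, Finset.sum_add_distrib, hΨdef,
        ← Finset.mul_sum]
      ring
    rw [h1, abs_mul, abs_of_nonneg hγ0]
    have h4 : |(∑ s, μ s * ∑ a, π s a * mA US uh s a) - Ψ| ≤ 2 * γ * K := by
      rw [hΨdef, ← Finset.sum_sub_distrib]
      have h5 : ∀ s : S, μ s * (∑ a, π s a * mA US uh s a) -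
          μ s * (∑ a, π s a * mA US V s a) =
          μ s * ((∑ a, π s a * mA US uh s a) - ∑ a, π s a * mA US V s a) :=
        fun s => by ring
      rw [Finset.sum_congr rfl fun s _ => h5 s]
      refine abs_wavg_le hμ fun s => ?_
      rw [← Finset.sum_sub_distrib]
      have h6 : ∀ a : A, π s a * mA US uh s a - π s a * mA US V s a =
          π s a * (mA US uh s a - mA US V s a) := fun a => by ring
      rw [Finset.sum_congr rfl fun a _ => h6 a]
      refine abs_wavg_le (hπ s) fun a => ?_
      calc |mA US uh s a - mA US V s a| ≤ dist uh V := mA_dist hne hker uh V s a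
        _ ≤ 2 * γ * K := hudist
    nlinarith
  -- combine
  have hfinal : |γ * minOver US Φ - γ * Ψ| ≤ 4 * γ * γ * K := by
    rw [heq, hming2] at hming
    have h2 : γ * minOver US Φ - γ * Ψ =
        -((∑ s, μ s * uh s) - ((∑ s, μ s * V s) + γ * minOver US Φ)) +
        ((∑ s, μ s * uh s) - ((∑ s, μ s * V s) + γ * Ψ)) := by ring
    rw [h2]
    have h3 := abs_add_le (-((∑ s, μ s * uh s) - ((∑ s, μ s * V s) + γ * minOver US Φ)))
      ((∑ s, μ s * uh s) - ((∑ s, μ s * V s) + γ * Ψ))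
    rw [abs_neg] at h3
    have h4 : |(∑ s, μ s * uh s) - ((∑ s, μ s * V s) + γ * minOver US Φ)| ≤
        2 * γ * γ * K := hming
    calc _ ≤ _ := h3
      _ ≤ 2 * γ * γ * K + 2 * γ * γ * K := add_le_add h4 huΨ
      _ = 4 * γ * γ * K := by ring
  have h5 : γ * |minOver US Φ - Ψ| ≤ γ * (8 * K * γ) := by
    have h6 : γ * minOver US Φ - γ * Ψ = γ * (minOver US Φ - Ψ) := by ring
    rw [h6, abs_mul, abs_of_nonneg hγ0] at hfinal
    nlinarith [mul_nonneg (mul_nonneg hγ0 hγ0) hKnn]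
  exact le_of_mul_le_mul_left h5 hγpos

set_option maxHeartbeats 1000000 in
lemma wssp_of_wsa {US : Set (S → A → S → ℝ)} (hne : US.Nonempty)
    (hker : ∀ P ∈ US, IsKernel P) (hcpt : IsCompact US) (hwsa : WeakSATractable US) :
    WeakSSPsa US := by
  intro V
  classical
  set K := dist V (0 : S → ℝ) with hK
  have hKnn : (0 : ℝ) ≤ K := dist_nonneg
  have hVabs : ∀ s, |V s| ≤ K := fun s => abs_le_dist_zero V s
  have hcardS : (0 : ℝ) < (Fintype.card S : ℝ) := by exact_mod_cast Fintype.card_pos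
  have hcardA : (0 : ℝ) < (Fintype.card A : ℝ) := by exact_mod_cast Fintype.card_pos
  set μ : S → ℝ := fun _ => ((Fintype.card S : ℝ))⁻¹ with hμdef
  set π : S → A → ℝ := fun _ _ => ((Fintype.card A : ℝ))⁻¹ with hπdef
  have hμ : μ ∈ stdSimplex ℝ S := by
    constructor
    · intro s; positivity
    · simp [hμdef, Finset.sum_const, Finset.card_univ]
  have hπ : IsPolicy π := by
    intro s
    constructor
    · intro a; positivity
    · simp [hπdef, Finset.sum_const, Finset.card_univ]
  set Φ : (S → A → S → ℝ) → ℝ :=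
    fun P => ∑ s, μ s * ∑ a, π s a * ∑ s', P s a s' * V s' with hΦdef
  have hΦcont : Continuous Φ := cont_big μ π V
  set Ψ : ℝ := ∑ s, μ s * ∑ a, π s a * mA US V s a with hΨdef
  have main : ∀ γ : ℝ, 0 < γ → γ ≤ 1 / 2 → |minOver US Φ - Ψ| ≤ 8 * K * γ :=
    fun γ h1 h2 => first_order hne hker hcpt hwsa V hμ hπ h1 h2
  have key : minOver US Φ = Ψ := by
    by_contra hx
    have hε : (0 : ℝ) < |minOver US Φ - Ψ| := abs_pos.2 (sub_ne_zero.2 hx)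
    set ε := |minOver US Φ - Ψ| with hεdef
    have hγ0pos : (0 : ℝ) < min (1 / 2 : ℝ) (ε / (16 * K + 1)) :=
      lt_min (by norm_num) (by positivity)
    have h1 := main _ hγ0pos (min_le_left _ _)
    have h2 : min (1 / 2 : ℝ) (ε / (16 * K + 1)) ≤ ε / (16 * K + 1) := min_le_right _ _
    have h3 : 8 * K * min (1 / 2 : ℝ) (ε / (16 * K + 1)) ≤ 8 * K * (ε / (16 * K + 1)) := by
      nlinarith
    have h4 : 8 * K * (ε / (16 * K + 1)) < ε := by
      rw [← mul_div_assoc, div_lt_iff₀ (by positivity : (0:ℝ) < 16 * K + 1)]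
      nlinarith
    nlinarith
  obtain ⟨Pstar, hPstar, hminP, hval⟩ := minOver_exists hne hcpt hΦcont.continuousOn
  have hPψ : Φ Pstar = Ψ := by rw [← hval, key]
  refine ⟨Pstar, hPstar, fun s a P hP => ?_⟩
  suffices h : ∑ s', Pstar s a s' * V s' = mA US V s a by
    rw [h]
    exact mA_le hker V hVabs hP
  have hgap : ∀ s a, (0 : ℝ) ≤ ∑ s', Pstar s a s' * V s' - mA US V s a := by
    intro s a
    have h1 := mA_le hker V hVabs hPstar (s := s) (a := a)
    linarith
  have hper : ∀ s : S, μ s * (∑ a, π s a * ∑ s', Pstar s a s' * V s') -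
      μ s * (∑ a, π s a * mA US V s a) =
      ∑ a, μ s * (π s a * (∑ s', Pstar s a s' * V s' - mA US V s a)) := by
    intro s
    rw [← mul_sub, ← Finset.sum_sub_distrib, Finset.mul_sum]
    exact Finset.sum_congr rfl fun a _ => by ring
  have h1 : Φ Pstar - Ψ =
      ∑ s, ∑ a, μ s * (π s a * (∑ s', Pstar s a s' * V s' - mA US V s a)) := by
    show (∑ s, μ s * ∑ a, π s a * ∑ s', Pstar s a s' * V s') -
      (∑ s, μ s * ∑ a, π s a * mA US V s a) = _
    rw [← Finset.sum_sub_distrib]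
    exact Finset.sum_congr rfl fun s _ => hper s
  have hsum0 : ∑ s, ∑ a, μ s * (π s a * (∑ s', Pstar s a s' * V s' - mA US V s a)) = 0 := by
    rw [← h1, hPψ, sub_self]
  have hterm : ∀ s ∈ Finset.univ, ∀ a ∈ (Finset.univ : Finset A),
      (0 : ℝ) ≤ μ s * (π s a * (∑ s', Pstar s a s' * V s' - mA US V s a)) := by
    intro s _ a _
    have h1 := hgap s a
    have h2 : (0 : ℝ) ≤ μ s := hμ.1 s
    have h3 : (0 : ℝ) ≤ π s a := (hπ s).1 a
    positivity
  have hz : μ s * (π s a * (∑ s', Pstar s a s' * V s' - mA US V s a)) = 0 := by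
    have h0 : ∀ s ∈ (Finset.univ : Finset S), (0 : ℝ) ≤
        ∑ a, μ s * (π s a * (∑ s', Pstar s a s' * V s' - mA US V s a)) :=
      fun s hs => Finset.sum_nonneg (hterm s hs)
    have h1 := (Finset.sum_eq_zero_iff_of_nonneg h0).1 hsum0 s (Finset.mem_univ s)
    exact (Finset.sum_eq_zero_iff_of_nonneg (hterm s (Finset.mem_univ s))).1 h1 a
      (Finset.mem_univ a)
  have hμne : μ s ≠ 0 := by rw [hμdef]; positivity
  have hπne : π s a ≠ 0 := by rw [hπdef]; positivity
  rcases mul_eq_zero.1 hz with h2 | h2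
  · exact absurd h2 hμne
  · rcases mul_eq_zero.1 h2 with h3 | h3
    · exact absurd h3 hπne
    · linarith [sub_eq_zero.1 h3]

end WSSP

end HistVal

set_option maxHeartbeats 1000000 in
theorem stmt17 {S A : Type*} [Fintype S] [Fintype A] [Nonempty S] [Nonempty A] [DecidableEq A]
    (US : Set (S → A → S → ℝ)) (hne : US.Nonempty) (hker : ∀ P ∈ US, IsKernel P)
    (hcpt : IsCompact US) (hconv : Convex ℝ US) (hwsa : WeakSATractable US)
    (r : S → A → S → ℝ) (hr : NextStateIndep r) (γ : ℝ) (hγ0 : 0 ≤ γ) (hγ1 : γ < 1)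
    (v : (S → A → ℝ) → (S → A → S → ℝ) → S → ℝ)
    (hv : ∀ π : S → A → ℝ, IsPolicy π → ∀ P ∈ US, TpiP π r γ P (v π P) = v π P) :
    ∃ f : S → A, ∀ μ ∈ stdSimplex ℝ S,
      minOver US (fun P => ∑ s, μ s * v (fun s a => if a = f s then (1 : ℝ) else 0) P s) =
        maxOver {π : List (S × A) → S → A → ℝ | IsHPolicy π}
          (fun π => minOver US (fun P => ∑ s, μ s * vHH π (fun _ => P) r γ s)) := by
  classical
  -- the optimal robust value function
  obtain ⟨vstar, hvstar⟩ := exists_fixed hγ0 hγ1 (Tstar US r γ)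
    (Tstar_contr hne hker hcpt r hγ0)
  have hbell_all : ∀ s a, r s a s + γ * mA US vstar s a ≤ vstar s := by
    intro s a
    have h1 : r s a s + γ * mA US vstar s a ≤ Tstar US r γ vstar s :=
      Finset.le_sup' (fun a => r s a s + γ * mA US vstar s a) (Finset.mem_univ a)
    rwa [hvstar] at h1
  -- greedy deterministic policy
  have hf : ∀ s : S, ∃ a : A, r s a s + γ * mA US vstar s a = vstar s := by
    intro s
    obtain ⟨a, _, ha⟩ := Finset.exists_mem_eq_sup' (Finset.univ_nonempty)
      (fun a : A => r s a s + γ * mA US vstar s a)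
    refine ⟨a, ?_⟩
    have h2 : Tstar US r γ vstar s = r s a s + γ * mA US vstar s a := ha
    rw [← h2, hvstar]
  set f : S → A := fun s => (hf s).choose with hfdef
  have hfs : ∀ s, r s (f s) s + γ * mA US vstar s (f s) = vstar s := fun s =>
    (hf s).choose_spec
  refine ⟨f, fun μ hμ => ?_⟩
  set πf : S → A → ℝ := fun s a => if a = f s then (1 : ℝ) else 0 with hπfdef
  have hπf : IsPolicy πf := by
    intro s
    constructor
    · intro a
      by_cases h : a = f s <;> simp [hπfdef, h]
    · rw [hπfdef]
      rw [Finset.sum_ite_eq' Finset.univ (f s) (fun _ => (1 : ℝ))]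
      simp
  -- vstar is the fixed point of TpiHat for the greedy policy
  have hhat : TpiHat US πf r γ vstar = vstar := by
    funext s
    show ∑ a, πf s a *
        minOver US (fun P => ∑ s', P s a s' * (r s a s' + γ * vstar s')) = vstar s
    have h1 : ∀ a : A, πf s a *
        minOver US (fun P => ∑ s', P s a s' * (r s a s' + γ * vstar s')) =
        if a = f s then
          minOver US (fun P => ∑ s', P s a s' * (r s a s' + γ * vstar s')) else 0 := by
      intro a
      by_cases h : a = f s <;> simp [hπfdef, h]
    rw [Finset.sum_congr rfl fun a _ => h1 a,
      Finset.sum_ite_eq' Finset.univ (f s)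
        (fun a => minOver US (fun P => ∑ s', P s a s' * (r s a s' + γ * vstar s')))]
    simp only [Finset.mem_univ, if_true]
    rw [minOver_congr fun P hP => row_eval (hker P hP) hr γ vstar s (f s),
      minOver_affine hne hcpt (cont_row s (f s) vstar).continuousOn _ γ hγ0]
    exact hfs s
  have hLHS := hwsa πf hπf r hr γ hγ0 hγ1 (v πf) (fun P hP => hv πf hπf P hP)
    vstar hhat μ hμ
  -- the worst-case kernel
  obtain ⟨Phat, hPhat, hPhatmin⟩ := wssp_of_wsa hne hker hcpt hwsa vstar
  have hPhatrow : ∀ s a, ∑ s', Phat s a s' * vstar s' ≤ mA US vstar s a := by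
    intro s a
    obtain ⟨P0, hP0, _, hval⟩ := mA_exists hne hcpt vstar s a
    rw [hval]
    exact hPhatmin s a P0 hP0
  have hbell : ∀ s a, r s a s + γ * ∑ s', Phat s a s' * vstar s' ≤ vstar s := by
    intro s a
    have h1 := hPhatrow s a
    have h2 := hbell_all s a
    nlinarith
  -- every history-dependent policy is dominated
  have hub : ∀ π : List (S × A) → S → A → ℝ, IsHPolicy π →
      minOver US (fun P => ∑ s, μ s * vHH π (fun _ => P) r γ s) ≤
        ∑ s, μ s * vstar s := by
    intro π hπ
    have hmem : minOver US (fun P => ∑ s, μ s * vHH π (fun _ => P) r γ s) ≤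
        ∑ s, μ s * vHH π (fun _ => Phat) r γ s := by
      refine minOver_le (c := -(dist r (0 : S → A → S → ℝ) * (1 - γ)⁻¹))
        (fun Q hQ => ?_) hPhat
      refine le_wavg_of_le hμ fun s => ?_
      exact neg_le_of_abs_le (vHH_abs_le hπ (hker Q hQ) r hγ0 hγ1 s)
    refine le_trans hmem ?_
    refine Finset.sum_le_sum fun s _ => ?_
    exact mul_le_mul_of_nonneg_left
      (vHH_le_vstar hπ (hker Phat hPhat) hr hγ0 hγ1 hbell s) (hμ.1 s)
  -- the stationary greedy policy attains the value
  have hπH : IsHPolicy (fun _ : List (S × A) => πf) := fun _ s => hπf s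
  have hstat : minOver US
      (fun P => ∑ s, μ s * vHH (fun _ : List (S × A) => πf) (fun _ => P) r γ s) =
      ∑ s, μ s * vstar s := by
    rw [minOver_congr (g := fun P => ∑ s, μ s * v πf P s) fun P hP => ?_]
    · exact hLHS
    · refine Finset.sum_congr rfl fun s _ => ?_
      congr 1
      have h1 := vHH_fixed πf hπf P (hker P hP) r hr hγ0 hγ1
      have h2 := hv πf hπf P hP
      rw [fixed_unique hγ0 hγ1 (TpiP πf r γ P) (TpiP_contr hπf (hker P hP) r hγ0) h1 h2]
  -- assemble
  rw [hLHS]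
  unfold maxOver
  refine le_antisymm ?_ ?_
  · refine le_csSup ?_ ?_
    · exact ⟨∑ s, μ s * vstar s, by rintro y ⟨π, hπ, rfl⟩; exact hub π hπ⟩
    · exact ⟨fun _ => πf, hπH, hstat⟩
  · refine csSup_le ⟨_, ⟨fun _ => πf, hπH, rfl⟩⟩ ?_
    rintro y ⟨π, hπ, rfl⟩
    exact hub π hπ
end RMDP
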